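/- Let Y be a standard normal random variable and let G : ℝ → ℝ be a monotone (nondecreasing or nonincreasing), right-continuous, non-constant function such that E|G(Y)|^{1+θ} < ∞ for some θ ∈ (0,1]. Then E[Y G(Y)] is well-defined (E|Y G(Y)| < ∞) and E[Y G(Y)] ≠ 0; equivalently ∫_ℝ x G(x) φ(x) dx ≠ 0. In particular, the Hermite rank of G equals 1. -/

import Mathlib

open MeasureTheory ProbabilityTheory Set
open scoped NNReal ENNReal

noncomputable section

/-- the standard normal density -/
def stdGaussDensity (x : ℝ) : ℝ := (Real.sqrt (2 * Real.pi))⁻¹ * Real.exp (-x ^ 2 / 2)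

namespace HermiteRankAux

lemma gauss_eq : gaussianReal 0 1 = (volume : Measure ℝ).withDensity (gaussianPDF 0 1) :=
  gaussianReal_of_var_ne_zero 0 one_ne_zero

lemma pdf_eq (x : ℝ) : gaussianPDFReal 0 1 x = stdGaussDensity x := by
  simp [gaussianPDFReal, stdGaussDensity, neg_div]

lemma integrable_gauss_iff (g : ℝ → ℝ) :
    Integrable g (gaussianReal 0 1) ↔
      Integrable (fun x => g x * gaussianPDFReal 0 1 x) (volume : Measure ℝ) := by
  rw [gauss_eq, integrable_withDensity_iff (measurable_gaussianPDF 0 1)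
    (Filter.Eventually.of_forall fun x => ENNReal.ofReal_lt_top)]
  simp_rw [gaussianPDF, ENNReal.toReal_ofReal (gaussianPDFReal_nonneg 0 1 _)]

lemma integral_gauss (g : ℝ → ℝ) :
    ∫ x, g x ∂(gaussianReal 0 1) = ∫ x, gaussianPDFReal 0 1 x * g x := by
  rw [gauss_eq]
  have h : gaussianPDF 0 1 = fun x => ((Real.toNNReal (gaussianPDFReal 0 1 x) : ℝ≥0) : ℝ≥0∞) :=
    rfl
  rw [h, integral_withDensity_eq_integral_smul
    ((measurable_gaussianPDFReal 0 1).real_toNNReal) g]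
  congr 1
  ext x
  rw [NNReal.smul_def, smul_eq_mul, Real.coe_toNNReal _ (gaussianPDFReal_nonneg 0 1 x)]

lemma integrable_abs_rpow_exp {s : ℝ} (hs : 0 ≤ s) :
    Integrable (fun x : ℝ => |x| ^ s * Real.exp (-(1/2 : ℝ) * x ^ 2)) := by
  have hs' : (-1 : ℝ) < s := by linarith
  have hb : (0 : ℝ) < 1/2 := by norm_num
  have h0 : IntegrableOn (fun x : ℝ => |x| ^ s * Real.exp (-(1/2 : ℝ) * x ^ 2)) (Ioi 0) := by
    refine (integrableOn_rpow_mul_exp_neg_mul_sq hb hs').congr_fun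
      (fun x hx => by rw [abs_of_pos hx]) measurableSet_Ioi
  rw [← integrableOn_univ, ← @Iio_union_Ici _ _ (0 : ℝ), integrableOn_union,
    integrableOn_Ici_iff_integrableOn_Ioi]
  refine ⟨?_, h0⟩
  rw [← (Measure.measurePreserving_neg (volume : Measure ℝ)).integrableOn_comp_preimage
      (Homeomorph.neg ℝ).measurableEmbedding]
  simpa only [Function.comp_def, abs_neg, neg_sq, neg_preimage, neg_Iio, neg_zero] using h0

lemma integrable_abs_rpow_gauss {s : ℝ} (hs : 0 ≤ s) :
    Integrable (fun x => |x| ^ s) (gaussianReal 0 1) := by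
  rw [integrable_gauss_iff]
  have h := (integrable_abs_rpow_exp hs).const_mul ((Real.sqrt (2 * Real.pi))⁻¹)
  refine h.congr (Filter.EventuallyEq.of_eq ?_)
  ext x
  simp only [gaussianPDFReal]
  push_cast
  ring_nf

lemma integrable_id_gauss : Integrable (fun x : ℝ => x) (gaussianReal 0 1) := by
  refine (integrable_abs_rpow_gauss (s := 1) zero_le_one).mono' measurable_id.aestronglyMeasurable ?_
  refine Filter.Eventually.of_forall fun x => ?_
  rw [Real.rpow_one, Real.norm_eq_abs]

lemma map_neg_gauss : Measure.map (fun x : ℝ => -x) (gaussianReal 0 1) = gaussianReal 0 1 := by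
  have h := gaussianReal_map_const_mul (μ := 0) (v := 1) (-1)
  have h1 : (fun x : ℝ => (-1 : ℝ) * x) = fun x : ℝ => -x := by ext x; ring
  have h2 : (NNReal.mk ((-1 : ℝ)^2) (sq_nonneg _)) * 1 = 1 := by ext; norm_num
  rw [h1, h2] at h
  simpa using h

lemma integral_id_gauss : ∫ x, x ∂(gaussianReal 0 1) = 0 := by
  have h : ∫ x, x ∂(gaussianReal 0 1) = ∫ x, -x ∂(gaussianReal 0 1) := by
    have h2 := integral_map (μ := gaussianReal 0 1) (φ := fun x : ℝ => -x)
      measurable_neg.aemeasurable (f := fun x : ℝ => x) measurable_id.aestronglyMeasurable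
    rw [map_neg_gauss] at h2
    simpa using h2
  rw [integral_neg] at h
  linarith

lemma key_pos (G : ℝ → ℝ) (hGmono : Monotone G) (hGnc : ∃ a, G a ≠ G 0)
    (hint : Integrable (fun x => x * G x) (gaussianReal 0 1)) :
    0 < ∫ x, x * G x ∂(gaussianReal 0 1) := by
  set μ := gaussianReal 0 1 with hμ
  have hid : Integrable (fun x : ℝ => x) μ := integrable_id_gauss
  have hf_eq : (fun x => x * (G x - G 0)) = fun x => x * G x - G 0 * x := by ext x; ring
  have hJint : Integrable (fun x => x * (G x - G 0)) μ := by
    rw [hf_eq]; exact hint.sub (hid.const_mul (G 0))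
  have hJnonneg : ∀ x, 0 ≤ x * (G x - G 0) := by
    intro x
    rcases le_total x 0 with hx | hx
    · nlinarith [hGmono hx]
    · exact mul_nonneg hx (sub_nonneg.2 (hGmono hx))
  have habs : volume ≪ μ := gaussianReal_absolutelyContinuous' 0 one_ne_zero
  -- strict positivity of J
  obtain ⟨a, ha⟩ := hGnc
  have hJpos : 0 < ∫ x, x * (G x - G 0) ∂μ := by
    rcases lt_or_gt_of_ne ha with hlt | hgt
    · -- G a < G 0, so a < 0
      have ha0 : a < 0 := by
        by_contra h
        exact absurd (hGmono (not_lt.1 h)) (not_le.2 hlt)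
      have hc : 0 < a * (G a - G 0) := by nlinarith
      have hS : μ (Iic a) ≠ 0 := by
        intro h0
        have := habs h0
        rw [Real.volume_Iic] at this
        exact ENNReal.top_ne_zero this
      have hSfin : μ (Iic a) ≠ ⊤ := measure_ne_top μ _
      have hbound : ∀ x ∈ Iic a, a * (G a - G 0) ≤ x * (G x - G 0) := by
        intro x hx
        have hx' : x ≤ a := hx
        have hGx : G x ≤ G a := hGmono hx'
        nlinarith
      have h1 : a * (G a - G 0) * (μ (Iic a)).toReal ≤ ∫ x in Iic a, x * (G x - G 0) ∂μ :=
        by have := setIntegral_ge_of_const_le_real measurableSet_Iic hSfin hbound hJint.integrableOn; rw [measureReal_def] at this; linarith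
      have h2 : ∫ x in Iic a, x * (G x - G 0) ∂μ ≤ ∫ x, x * (G x - G 0) ∂μ :=
        setIntegral_le_integral hJint (Filter.Eventually.of_forall hJnonneg)
      have h3 : 0 < (μ (Iic a)).toReal := ENNReal.toReal_pos hS hSfin
      nlinarith
    · -- G 0 < G a, so 0 < a
      have ha0 : 0 < a := by
        by_contra h
        exact absurd (hGmono (not_lt.1 h)) (not_le.2 hgt)
      have hc : 0 < a * (G a - G 0) := by nlinarith
      have hS : μ (Ici a) ≠ 0 := by
        intro h0
        have := habs h0
        rw [Real.volume_Ici] at this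
        exact ENNReal.top_ne_zero this
      have hSfin : μ (Ici a) ≠ ⊤ := measure_ne_top μ _
      have hbound : ∀ x ∈ Ici a, a * (G a - G 0) ≤ x * (G x - G 0) := by
        intro x hx
        have hx' : a ≤ x := hx
        have hGx : G a ≤ G x := hGmono hx'
        nlinarith
      have h1 : a * (G a - G 0) * (μ (Ici a)).toReal ≤ ∫ x in Ici a, x * (G x - G 0) ∂μ :=
        by have := setIntegral_ge_of_const_le_real measurableSet_Ici hSfin hbound hJint.integrableOn; rw [measureReal_def] at this; linarith
      have h2 : ∫ x in Ici a, x * (G x - G 0) ∂μ ≤ ∫ x, x * (G x - G 0) ∂μ :=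
        setIntegral_le_integral hJint (Filter.Eventually.of_forall hJnonneg)
      have h3 : 0 < (μ (Ici a)).toReal := ENNReal.toReal_pos hS hSfin
      nlinarith
  have hJeq : ∫ x, x * (G x - G 0) ∂μ = ∫ x, x * G x ∂μ := by
    rw [hf_eq, integral_sub hint (hid.const_mul (G 0)), integral_const_mul,
      integral_id_gauss]
    ring
  linarith [hJeq ▸ hJpos]

end HermiteRankAux

open HermiteRankAux in
/-- a monotone, right-continuous, non-constant `G` with
`E|G(Y)|^{1+θ} < ∞` satisfies `E[Y G(Y)] ≠ 0`, i.e. has Hermite rank 1. -/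
theorem hermite_rank_one_monotone {Ω : Type*} [MeasurableSpace Ω]
    (P : Measure Ω) [IsProbabilityMeasure P]
    (Y : Ω → ℝ) (hYmeas : Measurable Y)
    (hY : Measure.map Y P = gaussianReal 0 1)
    (G : ℝ → ℝ) (hGmono : Monotone G ∨ Antitone G)
    (hGrc : ∀ x, ContinuousWithinAt G (Set.Ici x) x)
    (hGnc : ∃ x y, G x ≠ G y)
    (θ : ℝ) (hθ : θ ∈ Set.Ioc (0 : ℝ) 1)
    (hmom : Integrable (fun ω => |G (Y ω)| ^ (1 + θ)) P) :
    Integrable (fun ω => Y ω * G (Y ω)) P ∧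
    (∫ ω, Y ω * G (Y ω) ∂P) ≠ 0 ∧
    (∫ x, x * G x * stdGaussDensity x) ≠ 0 := by
  obtain ⟨hθ0, hθ1⟩ := hθ
  have hGmeas : Measurable G := hGmono.elim Monotone.measurable Antitone.measurable
  set q : ℝ := 1 + θ with hq
  set p : ℝ := (1 + θ) / θ with hp
  have hpq : Real.HolderConjugate p q := by
    rw [Real.holderConjugate_iff]
    constructor
    · rw [hp]
      rw [lt_div_iff₀ hθ0]
      linarith
    · rw [hp, hq]
      field_simp
      ring
  have hq0 : (0 : ℝ) ≤ q := by rw [hq]; linarith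
  have hq_meas : Measurable (fun x : ℝ => |G x| ^ q) :=
    (Real.continuous_rpow_const hq0).measurable.comp hGmeas.abs
  have hxGmeas : Measurable (fun x : ℝ => x * G x) := measurable_id.mul hGmeas
  have hmomμ : Integrable (fun x => |G x| ^ q) (gaussianReal 0 1) := by
    rw [← hY]
    exact (integrable_map_measure hq_meas.aestronglyMeasurable hYmeas.aemeasurable).2 hmom
  have hPmom : Integrable (fun x => |x| ^ p) (gaussianReal 0 1) :=
    integrable_abs_rpow_gauss hpq.pos.le
  have hxGμ : Integrable (fun x => x * G x) (gaussianReal 0 1) := by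
    refine (hPmom.add hmomμ).mono' hxGmeas.aestronglyMeasurable ?_
    refine Filter.Eventually.of_forall fun x => ?_
    have h1 : |x| ^ p / p ≤ |x| ^ p :=
      div_le_self (Real.rpow_nonneg (abs_nonneg x) p) hpq.lt.le
    have h2 : |G x| ^ q / q ≤ |G x| ^ q :=
      div_le_self (Real.rpow_nonneg (abs_nonneg _) q) (by rw [hq]; linarith)
    rw [Real.norm_eq_abs, abs_mul]
    calc |x| * |G x| ≤ |x| ^ p / p + |G x| ^ q / q :=
          Real.young_inequality_of_nonneg (abs_nonneg _) (abs_nonneg _) hpq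
      _ ≤ |x| ^ p + |G x| ^ q := add_le_add h1 h2
  have hint_P : Integrable (fun ω => Y ω * G (Y ω)) P := by
    have h : Integrable (fun x => x * G x) (Measure.map Y P) := by rw [hY]; exact hxGμ
    exact (integrable_map_measure hxGmeas.aestronglyMeasurable hYmeas.aemeasurable).1 h
  have hint_eq : ∫ ω, Y ω * G (Y ω) ∂P = ∫ x, x * G x ∂(gaussianReal 0 1) := by
    have h := integral_map (φ := Y) (μ := P) hYmeas.aemeasurable
      (f := fun x => x * G x) hxGmeas.aestronglyMeasurable
    rw [hY] at h
    exact h.symm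
  have hne : (∫ x, x * G x ∂(gaussianReal 0 1)) ≠ 0 := by
    rcases hGmono with hmono | hanti
    · have hex : ∃ a, G a ≠ G 0 := by
        obtain ⟨x, y, hxy⟩ := hGnc
        by_contra h
        push_neg at h
        exact hxy ((h x).trans (h y).symm)
      exact (key_pos G hmono hex hxGμ).ne'
    · have hmono : Monotone (fun x => -G x) := fun a b hab => neg_le_neg (hanti hab)
      have hex : ∃ a, -G a ≠ -G 0 := by
        obtain ⟨x, y, hxy⟩ := hGnc
        by_contra h
        push_neg at h
        have hx := neg_injective ((h x).trans (h y).symm)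
        exact hxy hx
      have hint' : Integrable (fun x => x * -G x) (gaussianReal 0 1) := by
        refine hxGμ.neg.congr (Filter.EventuallyEq.of_eq ?_)
        ext x
        simp only [Pi.neg_apply]
        ring
      have hpos := key_pos (fun x => -G x) hmono hex hint'
      have heq : ∫ x, x * -G x ∂(gaussianReal 0 1) = -∫ x, x * G x ∂(gaussianReal 0 1) := by
        rw [← integral_neg]
        congr 1
        ext x; ring
      rw [heq] at hpos
      intro h0
      rw [h0] at hpos
      simp at hpos
  have hden : (∫ x, x * G x * stdGaussDensity x) = ∫ x, x * G x ∂(gaussianReal 0 1) := by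
    rw [integral_gauss]
    congr 1
    ext x
    rw [pdf_eq]
    ring
  exact ⟨hint_P, by rw [hint_eq]; exact hne, by rw [hden]; exact hne⟩

end
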